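/- The function φ(z) = (−z)^{−1+β}(1−z)^{−α−β} · P_n(1/z; −β, −α) satisfies the generalized eigenvalue equation L₁ φ = (−n−1) L₂ φ, where L₁ = z(1−z)∂_z² + (1−β−(2+α)z)∂_z and L₂ = (1−z)∂_z − (α+1)I. -/

import Mathlib

open Finset

noncomputable def gg (p q z : ℝ) : ℝ := (-z) ^ p * (1 - z) ^ q

lemma gg_p (p q z : ℝ) (hz : z < 0) : gg p q z = -z * gg (p-1) q z := by
  have hx : (-z) ≠ 0 := by intro h; nlinarith [neg_eq_zero.mp h]
  have h : (-z) ^ (p-1) * (-z) = (-z) ^ p := by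
    rw [← Real.rpow_add_one hx]; norm_num
  unfold gg; rw [← h]; ring

lemma gg_q (p q z : ℝ) (hz : z < 0) : gg p q z = (1-z) * gg p (q-1) z := by
  have hx : (1-z) ≠ 0 := by intro h; nlinarith
  have h : (1-z) ^ (q-1) * (1-z) = (1-z) ^ q := by
    rw [← Real.rpow_add_one hx]; norm_num
  unfold gg; rw [← h]; ring

lemma gg_hasDerivAt (p q z : ℝ) (hz : z < 0) :
    HasDerivAt (fun t => gg p q t) (-(p * gg (p-1) q z) - q * gg p (q-1) z) z := by
  have hz1 : (0:ℝ) < -z := by linarith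
  have hz2 : (0:ℝ) < 1 - z := by linarith
  have h1 : HasDerivAt (fun t : ℝ => (-t) ^ p) (p * (-z) ^ (p-1) * (-1)) z := by
    exact (Real.hasDerivAt_rpow_const (Or.inl (ne_of_gt hz1))).comp z (hasDerivAt_neg z)
  have h2 : HasDerivAt (fun t : ℝ => (1-t) ^ q) (q * (1-z) ^ (q-1) * (-1)) z := by
    have hin : HasDerivAt (fun t : ℝ => 1 - t) (-1) z := by
      simpa using (hasDerivAt_id z).const_sub 1
    exact (Real.hasDerivAt_rpow_const (Or.inl (ne_of_gt hz2))).comp z hin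
  have := h1.fun_mul h2
  unfold gg
  exact this.congr_deriv (by ring)

noncomputable def poch (a : ℝ) (k : ℕ) : ℝ := ∏ i ∈ Finset.range k, (a + i)

noncomputable def HR (n : ℕ) (α β : ℝ) (z : ℝ) : ℝ :=
  (poch β n / poch (α + 1) n) *
    ∑ k ∈ Finset.range (n + 1),
      (poch (-(n : ℝ)) k * poch (α + 1) k) / ((k.factorial : ℝ) * poch (1 - β - (n : ℝ)) k) * z ^ k

noncomputable def cc (n : ℕ) (α β : ℝ) (k : ℕ) : ℝ :=
  (poch (-α) n / poch (-β + 1) n) *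
    ((poch (-(n : ℝ)) k * poch (-β + 1) k) / ((k.factorial : ℝ) * poch (1 - -α - (n : ℝ)) k)
      * (-1) ^ k)

lemma phi_eq (n : ℕ) (α β z : ℝ) (hz : z < 0) :
    (-z) ^ (-1 + β) * (1 - z) ^ (-(α + β)) * HR n (-β) (-α) (1 / z)
      = ∑ k ∈ Finset.range (n + 1), cc n α β k * gg (-1 + β - k) (-(α + β)) z := by
  have hz1 : (0:ℝ) < -z := by linarith
  have key : ∀ k : ℕ, (-z) ^ (-1 + β) * (1 / z) ^ k
      = (-1:ℝ) ^ k * (-z) ^ (-1 + β - (k:ℝ)) := by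
    intro k
    have h1 : (1 / z) ^ k = (-1:ℝ) ^ k * ((-z) ^ (-(k:ℝ))) := by
      rw [Real.rpow_neg hz1.le, Real.rpow_natCast]
      rw [show (1 / z) = (-1) * (-z)⁻¹ by field_simp]
      rw [mul_pow, inv_pow]
    have h2 : (-z) ^ (-1 + β) * (-z) ^ (-(k:ℝ)) = (-z) ^ (-1 + β - (k:ℝ)) := by
      rw [← Real.rpow_add hz1]; congr 1
    rw [h1, ← mul_assoc, mul_comm ((-z) ^ (-1+β)) ((-1:ℝ)^k), mul_assoc, h2]
  unfold HR cc gg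
  rw [Finset.mul_sum, Finset.mul_sum]
  refine Finset.sum_congr rfl fun k _ => ?_
  have := key k
  linear_combination ((1 - z) ^ (-(α + β)) * (poch (-α) n / poch (-β + 1) n) *
    ((poch (-(n : ℝ)) k * poch (-β + 1) k) / ((k.factorial : ℝ) * poch (1 - -α - (n : ℝ)) k))) * this

lemma poch_succ (a : ℝ) (k : ℕ) : poch a (k+1) = poch a k * (a + k) :=
  Finset.prod_range_succ _ _

lemma poch_ne (a : ℝ) (k : ℕ) (h : ∀ j < k, a + (j:ℝ) ≠ 0) : poch a k ≠ 0 := by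
  unfold poch
  rw [Finset.prod_ne_zero_iff]
  exact fun i hi => h i (Finset.mem_range.mp hi)

lemma ccDivHelper (Cp P1 M1 s1 X P0 M0 s0 Y : ℝ) (h1 : M1 ≠ 0) (h0 : M0 ≠ 0)
    (h : P1 * s1 * X * M0 = P0 * s0 * Y * M1) :
    Cp * (P1 / M1 * s1) * X = Cp * (P0 / M0 * s0) * Y := by
  field_simp
  linear_combination Cp * h

lemma cc_rec (n : ℕ) (α β : ℝ) (hd : ∀ j < n, 1 + α - (n : ℝ) + (j : ℝ) ≠ 0)
    (k : ℕ) (hk : k < n) :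
    cc n α β (k+1) * (((k:ℝ)+1) * ((n:ℝ)-((k:ℝ)+1)-α))
      = cc n α β k * ((β-1-(k:ℝ)) * ((n:ℝ)-(k:ℝ))) := by
  have hfac : ((k.factorial : ℝ)) ≠ 0 := by exact_mod_cast k.factorial_ne_zero
  have hpk : poch (1 - -α - (n:ℝ)) k ≠ 0 := by
    refine poch_ne _ _ fun j hj => ?_
    have := hd j (lt_trans hj hk)
    intro h; apply this; linarith
  have hterm : (1 - -α - (n:ℝ) + k) ≠ 0 := by
    have := hd k hk
    intro h; apply this; linarith
  unfold cc
  rw [poch_succ, poch_succ, poch_succ]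
  push_cast [Nat.factorial_succ]
  refine ccDivHelper _ _ _ _ _ _ _ _ _ ?_ (mul_ne_zero hfac hpk) ?_
  · exact mul_ne_zero (mul_ne_zero (by positivity) hfac) (mul_ne_zero hpk hterm)
  · ring

lemma sum_zero (n : ℕ) (α β : ℝ) (hd : ∀ j < n, 1 + α - (n : ℝ) + (j : ℝ) ≠ 0) (G : ℕ → ℝ) :
    ∑ k ∈ Finset.range (n+1),
      cc n α β k * (((k:ℝ) * ((n:ℝ)-(k:ℝ)-α)) * G k - ((β-1-(k:ℝ)) * ((n:ℝ)-(k:ℝ))) * G (k+1)) = 0 := by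
  simp only [mul_sub]
  rw [Finset.sum_sub_distrib, Finset.sum_range_succ', Finset.sum_range_succ]
  rw [show (β - 1 - (n:ℝ)) * (n:ℝ) - (β - 1 - (n:ℝ)) * (n:ℝ) = 0 from sub_self _]
  simp only [Nat.cast_zero, zero_mul, mul_zero, sub_zero, zero_sub, neg_zero, add_zero]
  rw [sub_eq_zero]
  refine Finset.sum_congr rfl fun k hk => ?_
  have hkn := Finset.mem_range.mp hk
  have hrec := cc_rec n α β hd k hkn
  push_cast
  linear_combination G (k+1) * hrec

lemma perk (n k : ℕ) (α β z : ℝ) (hz : z < 0) :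
    z * (1-z) *
      (-((-1+β-(k:ℝ)) * (-(((-1+β-(k:ℝ))-1) * gg (-1+β-(k:ℝ)-1-1) (-(α+β)) z)
          - (-(α+β)) * gg (-1+β-(k:ℝ)-1) (-(α+β)-1) z))
        - (-(α+β)) * (-((-1+β-(k:ℝ)) * gg (-1+β-(k:ℝ)-1) (-(α+β)-1) z)
          - ((-(α+β))-1) * gg (-1+β-(k:ℝ)) (-(α+β)-1-1) z))
      + (1 - β - (2+α)*z) *
        (-((-1+β-(k:ℝ)) * gg (-1+β-(k:ℝ)-1) (-(α+β)) z)
          - (-(α+β)) * gg (-1+β-(k:ℝ)) (-(α+β)-1) z)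
      - (-(n:ℝ)-1) *
        ((1-z) * (-((-1+β-(k:ℝ)) * gg (-1+β-(k:ℝ)-1) (-(α+β)) z)
            - (-(α+β)) * gg (-1+β-(k:ℝ)) (-(α+β)-1) z)
          - (α+1) * gg (-1+β-(k:ℝ)) (-(α+β)) z)
    = ((k:ℝ) * ((n:ℝ)-(k:ℝ)-α)) * gg (-1+β-(k:ℝ)) (-(α+β)) z
      - ((β-1-(k:ℝ)) * ((n:ℝ)-(k:ℝ))) * gg (-1+β-(k:ℝ)-1) (-(α+β)) z := by
  have ea : gg (-1+β-(k:ℝ)) (-(α+β)) z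
      = z*z*(1-z)*(1-z) * gg (-1+β-(k:ℝ)-1-1) (-(α+β)-1-1) z := by
    rw [gg_p _ _ _ hz, gg_p _ _ _ hz, gg_q _ _ _ hz, gg_q _ _ _ hz]; ring
  have eb : gg (-1+β-(k:ℝ)-1) (-(α+β)) z
      = -z*(1-z)*(1-z) * gg (-1+β-(k:ℝ)-1-1) (-(α+β)-1-1) z := by
    rw [gg_p _ _ _ hz, gg_q _ _ _ hz, gg_q _ _ _ hz]; ring
  have ec : gg (-1+β-(k:ℝ)-1-1) (-(α+β)) z
      = (1-z)*(1-z) * gg (-1+β-(k:ℝ)-1-1) (-(α+β)-1-1) z := by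
    rw [gg_q _ _ _ hz, gg_q _ _ _ hz]; ring
  have ed : gg (-1+β-(k:ℝ)) (-(α+β)-1) z
      = z*z*(1-z) * gg (-1+β-(k:ℝ)-1-1) (-(α+β)-1-1) z := by
    rw [gg_p _ _ _ hz, gg_p _ _ _ hz, gg_q _ _ _ hz]; ring
  have ee : gg (-1+β-(k:ℝ)-1) (-(α+β)-1) z
      = -z*(1-z) * gg (-1+β-(k:ℝ)-1-1) (-(α+β)-1-1) z := by
    rw [gg_p _ _ _ hz, gg_q _ _ _ hz]; ring
  have ef : gg (-1+β-(k:ℝ)) (-(α+β)-1-1) z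
      = z*z * gg (-1+β-(k:ℝ)-1-1) (-(α+β)-1-1) z := by
    rw [gg_p _ _ _ hz, gg_p _ _ _ hz]; ring
  rw [ea, eb, ec, ed, ee, ef]
  ring

noncomputable def S0 (n : ℕ) (α β z : ℝ) : ℝ :=
  ∑ k ∈ Finset.range (n+1), cc n α β k * gg (-1+β-(k:ℝ)) (-(α+β)) z

noncomputable def S1 (n : ℕ) (α β z : ℝ) : ℝ :=
  ∑ k ∈ Finset.range (n+1), cc n α β k *
    (-((-1+β-(k:ℝ)) * gg (-1+β-(k:ℝ)-1) (-(α+β)) z)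
      - (-(α+β)) * gg (-1+β-(k:ℝ)) (-(α+β)-1) z)

noncomputable def S2 (n : ℕ) (α β z : ℝ) : ℝ :=
  ∑ k ∈ Finset.range (n+1), cc n α β k *
    (-((-1+β-(k:ℝ)) * (-(((-1+β-(k:ℝ))-1) * gg (-1+β-(k:ℝ)-1-1) (-(α+β)) z)
        - (-(α+β)) * gg (-1+β-(k:ℝ)-1) (-(α+β)-1) z))
      - (-(α+β)) * (-((-1+β-(k:ℝ)) * gg (-1+β-(k:ℝ)-1) (-(α+β)-1) z)
        - ((-(α+β))-1) * gg (-1+β-(k:ℝ)) (-(α+β)-1-1) z)) 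

lemma S0_hasDeriv (n : ℕ) (α β z : ℝ) (hz : z < 0) :
    HasDerivAt (fun t => S0 n α β t) (S1 n α β z) z := by
  unfold S0 S1
  exact HasDerivAt.fun_sum fun k _ =>
    HasDerivAt.const_mul (cc n α β k) (gg_hasDerivAt (-1+β-(k:ℝ)) (-(α+β)) z hz)

lemma S1_hasDeriv (n : ℕ) (α β z : ℝ) (hz : z < 0) :
    HasDerivAt (fun t => S1 n α β t) (S2 n α β z) z := by
  unfold S1 S2
  exact HasDerivAt.fun_sum fun k _ =>
    HasDerivAt.const_mul (cc n α β k)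
      (((HasDerivAt.const_mul (-1+β-(k:ℝ)) (gg_hasDerivAt (-1+β-(k:ℝ)-1) (-(α+β)) z hz)).neg).sub
        (HasDerivAt.const_mul (-(α+β)) (gg_hasDerivAt (-1+β-(k:ℝ)) (-(α+β)-1) z hz)))

lemma sum_main (n : ℕ) (α β z : ℝ) (hz : z < 0)
    (hd : ∀ j < n, 1 + α - (n : ℝ) + (j : ℝ) ≠ 0) :
    z * (1-z) * S2 n α β z + (1 - β - (2+α)*z) * S1 n α β z
      = (-(n:ℝ)-1) * ((1-z) * S1 n α β z - (α+1) * S0 n α β z) := by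
  rw [← sub_eq_zero, ← sum_zero n α β hd (fun j => gg (-1+β-(j:ℝ)) (-(α+β)) z)]
  unfold S0 S1 S2
  simp only [Finset.mul_sum, mul_sub, ← Finset.sum_add_distrib, ← Finset.sum_sub_distrib]
  refine Finset.sum_congr rfl fun k hk => ?_
  have hcast : gg (-1+β-(k:ℝ)-1) (-(α+β)) z = gg (-1+β-((k+1:ℕ):ℝ)) (-(α+β)) z := by
    congr 1; push_cast; ring
  have hp := perk n k α β z hz
  rw [hcast] at hp ⊢
  linear_combination (cc n α β k) * hp

theorem hr_quasi_eigenfunction_type4 (n : ℕ) (α β : ℝ)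
    (hβ : ∀ j < n, -α + (j : ℝ) ≠ 0)
    (hα : ∀ j < n, -β + 1 + (j : ℝ) ≠ 0)
    (hd : ∀ j < n, 1 + α - (n : ℝ) + (j : ℝ) ≠ 0) :
    ∀ z : ℝ, z < 0 →
      z * (1 - z) *
          deriv (deriv (fun t => (-t) ^ (-1 + β) * (1 - t) ^ (-(α + β)) * HR n (-β) (-α) (1 / t))) z
        + (1 - β - (2 + α) * z) *
          deriv (fun t => (-t) ^ (-1 + β) * (1 - t) ^ (-(α + β)) * HR n (-β) (-α) (1 / t)) z
      = (-(n : ℝ) - 1) *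
          ((1 - z) *
              deriv (fun t => (-t) ^ (-1 + β) * (1 - t) ^ (-(α + β)) * HR n (-β) (-α) (1 / t)) z
            - (α + 1) * ((-z) ^ (-1 + β) * (1 - z) ^ (-(α + β)) * HR n (-β) (-α) (1 / z))) := by
  intro z hz
  have hphi : ∀ t : ℝ, t < 0 →
      (-t) ^ (-1 + β) * (1 - t) ^ (-(α + β)) * HR n (-β) (-α) (1 / t) = S0 n α β t :=
    fun t ht => by unfold S0; exact phi_eq n α β t ht
  set φ := fun t => (-t) ^ (-1 + β) * (1 - t) ^ (-(α + β)) * HR n (-β) (-α) (1 / t) with hφ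
  have hd1 : ∀ t ∈ Set.Iio (0:ℝ), deriv φ t = S1 n α β t := by
    intro t ht
    have hev : φ =ᶠ[nhds t] (fun s => S0 n α β s) :=
      Filter.eventuallyEq_of_mem (Iio_mem_nhds ht) (fun s hs => hphi s hs)
    rw [hev.deriv_eq]
    exact (S0_hasDeriv n α β t ht).deriv
  have hd2 : deriv (deriv φ) z = S2 n α β z := by
    have hev : deriv φ =ᶠ[nhds z] (fun t => S1 n α β t) :=
      Filter.eventuallyEq_of_mem (Iio_mem_nhds hz) hd1
    rw [hev.deriv_eq]
    exact (S1_hasDeriv n α β z hz).deriv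
  rw [hd2, hd1 z hz, hphi z hz]
  exact sum_main n α β z hz hd
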